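/- Let (a,b) ⊆ ℝ be an open interval and let f : (a,b) → ℝ be a Lebesgue measurable function that is locally bounded on (a,b) (i.e., bounded on a neighbourhood of every point of (a,b)). Then for every α > 0, f has an indefinite MC^α integral on (a,b). -/

import Mathlib

open Filter Set Topology MeasureTheory

/-- `φ` is an `α`-control function for the pair `(F, f)` on the interval `I`:
`φ` is strictly increasing on `I` and for every `x ∈ I`,
`(F y - F x - f x (y - x)) / (φ (x + α (y - x)) - φ x) → 0` as `y → x` within `I \ {x}`. -/
def IsControlFn (α : ℝ) (I : Set ℝ) (F f φ : ℝ → ℝ) : Prop :=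
  StrictMonoOn φ I ∧ ∀ x ∈ I,
    Tendsto (fun y => (F y - F x - f x * (y - x)) / (φ (x + α * (y - x)) - φ x))
      (𝓝[I \ {x}] x) (𝓝 0)

/-- `F` is an indefinite `MC^α` integral of `f` on `I`. -/
def IsMCIntegral (α : ℝ) (I : Set ℝ) (F f : ℝ → ℝ) : Prop :=
  ∃ φ : ℝ → ℝ, IsControlFn α I F f φ
lemma aux_bound {a b : ℝ} {f : ℝ → ℝ}
    (hloc : ∀ x ∈ Set.Ioo a b, ∃ C : ℝ, ∀ᶠ y in 𝓝[Set.Ioo a b] x, |f y| ≤ C)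
    {K : Set ℝ} (hK : IsCompact K) (hKI : K ⊆ Set.Ioo a b) :
    ∃ M : ℝ, ∀ y ∈ K, |f y| ≤ M := by
  have h : ∀ x ∈ K, ∃ C : ℝ, {y | |f y| ≤ C} ∈ 𝓝 x := by
    intro x hx
    obtain ⟨C, hC⟩ := hloc x (hKI hx)
    rw [nhdsWithin_eq_nhds.2 (isOpen_Ioo.mem_nhds (hKI hx))] at hC
    exact ⟨C, hC⟩
  choose C hC using h
  obtain ⟨t, ht⟩ := hK.elim_nhds_subcover' (fun x hx => {y | |f y| ≤ C x hx}) hC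
  refine ⟨∑ x ∈ t, |C x.1 x.2|, fun y hy => ?_⟩
  obtain ⟨x, hxt, hyx⟩ := Set.mem_iUnion₂.1 (ht hy)
  calc |f y| ≤ C x x.2 := hyx
    _ ≤ |C x x.2| := le_abs_self _
    _ ≤ ∑ x ∈ t, |C x x.2| := Finset.single_le_sum (f := fun x : K => |C x.1 x.2|)
        (fun i _ => abs_nonneg _) hxt

lemma exists_psi {N : Set ℝ} (hN : volume N = 0) :
    ∃ ψ : ℝ → ℝ, Monotone ψ ∧ ∀ x ∈ N, ∀ m : ℕ, ∃ δ > 0, ∀ u v : ℝ, u ≤ v →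
      Set.Ioc u v ⊆ Metric.ball x δ → (m + 1 : ℝ) * (v - u) ≤ ψ v - ψ u := by
  have hreg : ∀ k : ℕ, ∃ U : Set ℝ, N ⊆ U ∧ IsOpen U ∧
      volume U < ENNReal.ofReal ((1/2) ^ k) := by
    intro k
    obtain ⟨U, hNU, hUopen, hUvol⟩ := Set.exists_isOpen_lt_of_lt N (ENNReal.ofReal ((1/2)^k))
      (by rw [hN]; exact ENNReal.ofReal_pos.2 (by positivity))
    exact ⟨U, hNU, hUopen, hUvol⟩
  choose U hNU hUopen hUvol using hreg
  set ψk : ℕ → ℝ → ℝ := fun k x => (volume (U k ∩ Set.Iic x)).toReal with hψk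
  have hfin : ∀ k x, volume (U k ∩ Set.Iic x) ≠ ⊤ :=
    fun k x => ((measure_mono Set.inter_subset_left).trans_lt
      ((hUvol k).trans_le le_top)).ne
  have hψk_mono : ∀ k, Monotone (ψk k) := by
    intro k x y hxy
    exact ENNReal.toReal_mono (hfin k y)
      (measure_mono (Set.inter_subset_inter_right _ (Set.Iic_subset_Iic.2 hxy)))
  have hψk_le : ∀ k x, ψk k x ≤ (1/2 : ℝ) ^ k := by
    intro k x
    exact ENNReal.toReal_le_of_le_ofReal (by positivity)
      ((measure_mono Set.inter_subset_left).trans (hUvol k).le)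
  have hψk_nonneg : ∀ k x, 0 ≤ ψk k x := fun k x => ENNReal.toReal_nonneg
  have hsum : ∀ x, Summable (fun k => ψk k x) := by
    intro x
    exact Summable.of_nonneg_of_le (fun k => hψk_nonneg k x) (fun k => hψk_le k x)
      (summable_geometric_of_lt_one (by norm_num) (by norm_num))
  set ψ : ℝ → ℝ := fun x => ∑' k, ψk k x with hψ
  have hψmono : Monotone ψ := fun x y hxy =>
    Summable.tsum_le_tsum (fun k => hψk_mono k hxy) (hsum x) (hsum y)
  refine ⟨ψ, hψmono, fun x hx m => ?_⟩
  set V : Set ℝ := ⋂ k ∈ Finset.range (m+1), U k with hV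
  have hVopen : IsOpen V := isOpen_biInter_finset (fun k _ => hUopen k)
  have hxV : x ∈ V := Set.mem_iInter₂.2 (fun k _ => hNU k hx)
  obtain ⟨δ, hδ, hball⟩ := Metric.isOpen_iff.1 hVopen x hxV
  refine ⟨δ, hδ, fun u v huv hsub => ?_⟩
  have key : ∀ k ∈ Finset.range (m+1), ψk k v - ψk k u = v - u := by
    intro k hk
    have hsubU : Set.Ioc u v ⊆ U k := fun t ht =>
      Set.mem_iInter₂.1 (hball (hsub ht)) k hk
    have hsplit : U k ∩ Set.Iic v = (U k ∩ Set.Iic u) ∪ Set.Ioc u v := by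
      ext t
      simp only [Set.mem_inter_iff, Set.mem_union, Set.mem_Iic, Set.mem_Ioc]
      constructor
      · rintro ⟨htU, htv⟩
        rcases le_or_gt t u with h | h
        · exact Or.inl ⟨htU, h⟩
        · exact Or.inr ⟨h, htv⟩
      · rintro (⟨htU, htu⟩ | h)
        · exact ⟨htU, htu.trans huv⟩
        · exact ⟨hsubU h, h.2⟩
    have hdisj : Disjoint (U k ∩ Set.Iic u) (Set.Ioc u v) := by
      apply Set.disjoint_left.2
      rintro t ⟨_, htu⟩ ⟨hut, _⟩
      exact absurd htu (not_le.2 hut)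
    have hmeas : volume (U k ∩ Set.Iic v) = volume (U k ∩ Set.Iic u) + volume (Set.Ioc u v) := by
      rw [hsplit, measure_union hdisj measurableSet_Ioc]
    have hstep : ψk k v = ψk k u + (v - u) := by
      simp only [hψk]
      rw [hmeas, Real.volume_Ioc, ENNReal.toReal_add (hfin k u) ENNReal.ofReal_ne_top,
        ENNReal.toReal_ofReal (by linarith)]
    linarith [hstep]
  calc (m + 1 : ℝ) * (v - u) = ∑ k ∈ Finset.range (m+1), (ψk k v - ψk k u) := by
        rw [Finset.sum_congr rfl key, Finset.sum_const, Finset.card_range, nsmul_eq_mul]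
        push_cast; ring
    _ ≤ ∑' k, (ψk k v - ψk k u) :=
        Summable.sum_le_tsum _ (fun k _ => sub_nonneg.2 (hψk_mono k huv)) ((hsum v).sub (hsum u))
    _ = ψ v - ψ u := Summable.tsum_sub (hsum v) (hsum u)

lemma abs_sub_le_of_mem_uIcc {x y t : ℝ} (ht : t ∈ Set.uIcc x y) : |t - x| ≤ |y - x| := by
  rcases Set.mem_uIcc.1 ht with ⟨h1, h2⟩ | ⟨h1, h2⟩ <;> rw [abs_le] <;>
    constructor <;> linarith [le_abs_self (y - x), neg_abs_le (y - x)]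

/-- Every measurable locally bounded function on `(a,b)` is `MC^α` integrable for every `α > 0`. -/
theorem stmt_7 (a b : ℝ) (f : ℝ → ℝ)
    (hmeas : Measurable ((Set.Ioo a b).restrict f))
    (hloc : ∀ x ∈ Set.Ioo a b, ∃ C : ℝ, ∀ᶠ y in 𝓝[Set.Ioo a b] x, |f y| ≤ C)
    (α : ℝ) (hα : 0 < α) :
    ∃ F : ℝ → ℝ, IsMCIntegral α (Set.Ioo a b) F f := by
  rcases le_or_gt b a with hba | hab
  · exact ⟨0, id, fun u _ v _ h => h,
      fun x hx => absurd (hx.1.trans hx.2) (not_lt.2 hba)⟩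
  set I := Set.Ioo a b with hI
  have hIopen : IsOpen I := isOpen_Ioo
  set g : ℝ → ℝ := I.indicator f with hgdef
  have hgmeas : Measurable g := by
    apply measurable_of_restrict_of_restrict_compl (measurableSet_Ioo (a := a) (b := b))
    · have h : I.restrict g = I.restrict f := funext fun x => Set.indicator_of_mem x.2 f
      change Measurable (I.restrict g); rw [h]; exact hmeas
    · have h : Iᶜ.restrict g = fun _ => 0 := funext fun x => Set.indicator_of_notMem x.2 f
      change Measurable (Iᶜ.restrict g); rw [h]; exact measurable_const
  have hgf : ∀ ⦃t⦄, t ∈ I → g t = f t := fun t ht => Set.indicator_of_mem ht f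
  have hint : ∀ x ∈ I, ∀ y ∈ I, IntervalIntegrable g volume x y := by
    intro x hx y hy
    have hsub : Set.uIcc x y ⊆ I := Set.OrdConnected.uIcc_subset Set.ordConnected_Ioo hx hy
    obtain ⟨M, hM⟩ := aux_bound hloc isCompact_uIcc hsub
    refine (Measure.integrableOn_of_bounded (M := M) isCompact_uIcc.measure_lt_top.ne
      hgmeas.aestronglyMeasurable ?_).intervalIntegrable
    filter_upwards [ae_restrict_mem measurableSet_uIcc] with t ht
    rw [Real.norm_eq_abs, hgf (hsub ht)]
    exact hM t ht
  set c : ℝ := (a + b) / 2 with hc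
  have hcI : c ∈ I := ⟨by simp only [hc]; linarith, by simp only [hc]; linarith⟩
  set F : ℝ → ℝ := fun x => ∫ t in c..x, g t with hF
  have hFdiff : ∀ x ∈ I, ∀ y ∈ I, F y - F x = ∫ t in x..y, g t := fun x hx y hy =>
    intervalIntegral.integral_interval_sub_left (hint c hcI y hy) (hint c hcI x hx)
  -- truncations
  set J : ℕ → Set ℝ := fun n => Set.Ioo (a + 1/(n+1)) (b - 1/(n+1)) with hJ
  have hJIcc : ∀ n : ℕ, Set.Icc (a + 1/(n+1 : ℝ)) (b - 1/(n+1 : ℝ)) ⊆ I := by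
    intro n t ht
    have hn : (0:ℝ) < 1/(n+1) := by positivity
    exact ⟨by linarith [ht.1], by linarith [ht.2]⟩
  have hJI : ∀ n, J n ⊆ I := fun n => Set.Ioo_subset_Icc_self.trans (hJIcc n)
  set G : ℕ → ℝ → ℝ := fun n => (J n).indicator g with hG
  have hGg : ∀ n, ∀ ⦃t⦄, t ∈ J n → G n t = g t := fun n t ht => Set.indicator_of_mem ht g
  have hGint : ∀ n, Integrable (G n) volume := by
    intro n
    obtain ⟨M, hM⟩ := aux_bound hloc isCompact_Icc (hJIcc n)
    rw [hG]
    rw [integrable_indicator_iff measurableSet_Ioo]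
    refine Measure.integrableOn_of_bounded (M := M)
      ((measure_mono Set.Ioo_subset_Icc_self).trans_lt isCompact_Icc.measure_lt_top).ne
      hgmeas.aestronglyMeasurable ?_
    filter_upwards [ae_restrict_mem measurableSet_Ioo] with t ht
    rw [Real.norm_eq_abs, hgf (hJI n ht)]
    exact hM t (Set.Ioo_subset_Icc_self ht)
  -- Lebesgue differentiation
  have haeN : ∀ n : ℕ, ∀ᵐ x : ℝ, Tendsto
      (fun y => ⨍ t in Metric.closedBall x |y - x|, ‖G n t - G n x‖)
      (𝓝[I \ {x}] x) (𝓝 0) := by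
    intro n
    filter_upwards [IsUnifLocDoublingMeasure.ae_tendsto_average_norm_sub (μ := volume)
      (hGint n).locallyIntegrable 1] with x hx
    apply hx (fun _ => x) (fun y => |y - x|) ?_ ?_
    · rw [tendsto_nhdsWithin_iff]
      constructor
      · have h : Tendsto (fun y : ℝ => |y - x|) (𝓝 x) (𝓝 |x - x|) :=
          ((continuous_id.sub continuous_const).abs).tendsto x
        simpa using h.mono_left nhdsWithin_le_nhds
      · filter_upwards [self_mem_nhdsWithin] with y hy
        exact Set.mem_Ioi.2 (abs_pos.2 (sub_ne_zero.2 hy.2))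
    · filter_upwards with y
      simpa using Metric.mem_closedBall_self (abs_nonneg (y - x))
  have hae : ∀ᵐ x : ℝ, ∀ n : ℕ, Tendsto
      (fun y => ⨍ t in Metric.closedBall x |y - x|, ‖G n t - G n x‖)
      (𝓝[I \ {x}] x) (𝓝 0) := ae_all_iff.2 haeN
  have hNnull : volume {x : ℝ | ¬ ∀ n : ℕ, Tendsto
      (fun y => ⨍ t in Metric.closedBall x |y - x|, ‖G n t - G n x‖)
      (𝓝[I \ {x}] x) (𝓝 0)} = 0 := ae_iff.1 hae
  obtain ⟨ψ, hψmono, hψkey⟩ := exists_psi hNnull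
  set φ : ℝ → ℝ := fun t => t + ψ t with hφ
  refine ⟨F, φ, fun u _ v _ huv => add_lt_add_of_lt_of_le huv (hψmono huv.le), ?_⟩
  intro x hx
  have hball_mem : ∀ r : ℝ, 0 < r → ∀ᶠ y in 𝓝[I \ {x}] x, |y - x| < r := by
    intro r hr
    apply eventually_nhdsWithin_of_eventually_nhds
    filter_upwards [Metric.ball_mem_nhds x hr] with y hy
    rwa [Metric.mem_ball, Real.dist_eq] at hy
  -- generic denominator lower bound
  have hden : ∀ y : ℝ, y ≠ x → α * |y - x| ≤ |φ (x + α * (y - x)) - φ x| := by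
    intro y hy
    rcases lt_or_gt_of_ne hy with hlt | hgt
    · have hprod : α * (y - x) < 0 := mul_neg_of_pos_of_neg hα (by linarith)
      have h1 : ψ (x + α * (y - x)) ≤ ψ x := hψmono (by linarith)
      have heq : α * |y - x| = -(α * (y - x)) := by
        rw [abs_of_neg (by linarith : y - x < 0)]; ring
      rw [abs_of_neg (show φ (x + α * (y - x)) - φ x < 0 by
        simp only [hφ]; linarith)]
      simp only [hφ]; linarith
    · have hprod : 0 < α * (y - x) := mul_pos hα (by linarith)
      have h1 : ψ x ≤ ψ (x + α * (y - x)) := hψmono (by linarith)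
      have heq : α * |y - x| = α * (y - x) := by
        rw [abs_of_pos (by linarith : (0:ℝ) < y - x)]
      rw [abs_of_pos (show 0 < φ (x + α * (y - x)) - φ x by
        simp only [hφ]; linarith)]
      simp only [hφ]; linarith
  have hden_ne : ∀ y : ℝ, y ≠ x → φ (x + α * (y - x)) - φ x ≠ 0 := by
    intro y hy
    have h0 : 0 < α * |y - x| := mul_pos hα (abs_pos.2 (sub_ne_zero.2 hy))
    exact abs_pos.1 (h0.trans_le (hden y hy))
  by_cases hxN : ∀ n : ℕ, Tendsto
      (fun y => ⨍ t in Metric.closedBall x |y - x|, ‖G n t - G n x‖)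
      (𝓝[I \ {x}] x) (𝓝 0)
  · -- good point
    obtain ⟨n, hn⟩ := exists_nat_one_div_lt
      (show (0:ℝ) < min (x - a) (b - x) from lt_min (by linarith [hx.1]) (by linarith [hx.2]))
    have hxJ : x ∈ J n :=
      ⟨by have := min_le_left (x - a) (b - x); linarith,
       by have := min_le_right (x - a) (b - x); linarith⟩
    obtain ⟨δ', hδ', hδ'ball⟩ := Metric.isOpen_iff.1 (show IsOpen (J n) from isOpen_Ioo) x hxJ
    apply squeeze_zero_norm'
      (a := fun y => (2 / α) * ⨍ t in Metric.closedBall x |y - x|, ‖G n t - G n x‖)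
    · filter_upwards [hball_mem δ' hδ', self_mem_nhdsWithin] with y hyδ hyI
      have hyx : y ≠ x := fun h => hyI.2 (by simp [h])
      have huIcc : Set.uIcc x y ⊆ J n := fun t ht => hδ'ball
        (by rw [Metric.mem_ball, Real.dist_eq]; exact (abs_sub_le_of_mem_uIcc ht).trans_lt hyδ)
      have hyI' : y ∈ I := hJI n (huIcc Set.right_mem_uIcc)
      have hGnx : G n x = f x := by rw [hGg n hxJ, hgf hx]
      have hGnii : IntervalIntegrable (G n) volume x y := (hGint n).intervalIntegrable
      have hnum : F y - F x - f x * (y - x) = ∫ t in x..y, (G n t - G n x) := by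
        rw [hFdiff x hx y hyI',
          intervalIntegral.integral_congr (fun t ht => (hGg n (huIcc ht)).symm),
          intervalIntegral.integral_sub hGnii intervalIntegrable_const,
          intervalIntegral.integral_const, hGnx, smul_eq_mul]
        ring
      have hr0 : 0 < |y - x| := abs_pos.2 (sub_ne_zero.2 hyx)
      have hIoc_sub : Set.uIoc x y ⊆ Metric.closedBall x |y - x| := fun t ht => by
        rw [Metric.mem_closedBall, Real.dist_eq]
        exact abs_sub_le_of_mem_uIcc (Set.uIoc_subset_uIcc ht)
      have hIntCB : IntegrableOn (fun t => ‖G n t - G n x‖)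
          (Metric.closedBall x |y - x|) volume :=
        (((hGint n).integrableOn.sub (integrableOn_const
          measure_closedBall_lt_top.ne)).norm)
      have hbound : ‖F y - F x - f x * (y - x)‖ ≤
          2 * |y - x| * ⨍ t in Metric.closedBall x |y - x|, ‖G n t - G n x‖ := by
        rw [hnum]
        calc ‖∫ t in x..y, (G n t - G n x)‖
            ≤ ∫ t in Set.uIoc x y, ‖G n t - G n x‖ :=
              intervalIntegral.norm_integral_le_integral_norm_uIoc
          _ ≤ ∫ t in Metric.closedBall x |y - x|, ‖G n t - G n x‖ :=
              setIntegral_mono_set hIntCB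
                (Eventually.of_forall fun t => norm_nonneg _)
                (HasSubset.Subset.eventuallyLE hIoc_sub)
          _ = 2 * |y - x| * ⨍ t in Metric.closedBall x |y - x|, ‖G n t - G n x‖ := by
              rw [setAverage_eq, Real.volume_real_closedBall (abs_nonneg _),
                smul_eq_mul]
              field_simp
      have havg0 : 0 ≤ ⨍ t in Metric.closedBall x |y - x|, ‖G n t - G n x‖ :=
        integral_nonneg (fun t => norm_nonneg _)
      rw [norm_div, Real.norm_eq_abs, Real.norm_eq_abs]
      calc |F y - F x - f x * (y - x)| / |φ (x + α * (y - x)) - φ x|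
          ≤ (2 * |y - x| * ⨍ t in Metric.closedBall x |y - x|, ‖G n t - G n x‖) /
            (α * |y - x|) := by
            apply div_le_div₀ (by positivity) ?_ (by positivity) (hden y hyx)
            rw [← Real.norm_eq_abs]; exact hbound
        _ = (2 / α) * ⨍ t in Metric.closedBall x |y - x|, ‖G n t - G n x‖ := by
            field_simp
    · have h := (hxN n).const_mul (2 / α)
      simpa using h
  · -- bad point
    have hxN' : x ∈ {x : ℝ | ¬ ∀ n : ℕ, Tendsto
        (fun y => ⨍ t in Metric.closedBall x |y - x|, ‖G n t - G n x‖)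
        (𝓝[I \ {x}] x) (𝓝 0)} := hxN
    obtain ⟨C, hC⟩ := hloc x hx
    rw [nhdsWithin_eq_nhds.2 (hIopen.mem_nhds hx)] at hC
    obtain ⟨δ₁, hδ₁, hCball⟩ := Metric.eventually_nhds_iff.1 hC
    have hC0 : 0 ≤ C := (abs_nonneg (f x)).trans (hCball (by rwa [dist_self]))
    obtain ⟨δ₂, hδ₂, hball₂⟩ := Metric.isOpen_iff.1 hIopen x hx
    rw [Metric.tendsto_nhds]
    intro ε hε
    obtain ⟨m, hm⟩ := exists_nat_gt ((C + |f x| + 1) / (α * ε))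
    obtain ⟨δ₃, hδ₃, hψm⟩ := hψkey x hxN' m
    have hεm : C + |f x| + 1 < ((m : ℝ) + 1) * (α * ε) := by
      have h1 : (0:ℝ) < α * ε := by positivity
      calc C + |f x| + 1 = ((C + |f x| + 1) / (α * ε)) * (α * ε) := by field_simp
        _ < (m : ℝ) * (α * ε) := mul_lt_mul_of_pos_right hm h1
        _ ≤ ((m : ℝ) + 1) * (α * ε) := by nlinarith
    filter_upwards [hball_mem (min (δ₃ / α) (min δ₁ δ₂)) (by positivity),
      self_mem_nhdsWithin] with y hyδ hyI
    have hyx : y ≠ x := fun h => hyI.2 (by simp [h])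
    have hr0 : 0 < |y - x| := abs_pos.2 (sub_ne_zero.2 hyx)
    have hyδ₁ : |y - x| < δ₁ := hyδ.trans_le ((min_le_right _ _).trans (min_le_left _ _))
    have hyδ₂ : |y - x| < δ₂ := hyδ.trans_le ((min_le_right _ _).trans (min_le_right _ _))
    have hyδ₃ : α * |y - x| < δ₃ := by
      have h := hyδ.trans_le (min_le_left _ _)
      rw [lt_div_iff₀ hα] at h
      linarith [h]
    have hyI' : y ∈ I := hball₂ (by rwa [Metric.mem_ball, Real.dist_eq])
    -- numerator bound
    have hgb : ∀ t ∈ Set.uIoc x y, ‖g t‖ ≤ C := by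
      intro t ht
      have habs : |t - x| ≤ |y - x| := abs_sub_le_of_mem_uIcc (Set.uIoc_subset_uIcc ht)
      have htI : t ∈ I := hball₂ (by rw [Metric.mem_ball, Real.dist_eq]; exact habs.trans_lt hyδ₂)
      rw [Real.norm_eq_abs, hgf htI]
      exact hCball (by rw [Real.dist_eq]; exact habs.trans_lt hyδ₁)
    have hnum : |F y - F x - f x * (y - x)| ≤ (C + |f x|) * |y - x| := by
      rw [hFdiff x hx y hyI']
      calc |(∫ t in x..y, g t) - f x * (y - x)|
          ≤ |∫ t in x..y, g t| + |f x * (y - x)| := abs_sub _ _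
        _ ≤ C * |y - x| + |f x| * |y - x| := by
            gcongr ?_ + ?_
            · exact intervalIntegral.norm_integral_le_of_norm_le_const hgb
            · rw [abs_mul]
        _ = (C + |f x|) * |y - x| := by ring
    -- denominator bound
    have hden2 : ((m:ℝ) + 1) * (α * |y - x|) ≤ |φ (x + α * (y - x)) - φ x| := by
      rcases lt_or_gt_of_ne hyx with hlt | hgt
      · -- y < x, h < 0
        have hprod : α * (y - x) < 0 := mul_neg_of_pos_of_neg hα (by linarith)
        have hIoc : Set.Ioc (x + α * (y - x)) x ⊆ Metric.ball x δ₃ := by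
          intro t ht
          rw [Metric.mem_ball, Real.dist_eq, abs_of_nonpos (by linarith [ht.2])]
          have h1 : α * |y - x| = -(α * (y - x)) := by
            rw [abs_of_neg (by linarith : y - x < 0)]; ring
          linarith [ht.1]
        have hk := hψm (x + α * (y - x)) x (by linarith) hIoc
        simp only [sub_add_cancel_left] at hk
        have h1 : α * |y - x| = -(α * (y - x)) := by
          rw [abs_of_neg (by linarith : y - x < 0)]; ring
        have h2 : φ (x + α * (y - x)) - φ x < 0 := by
          simp only [hφ]
          have := hψmono (by linarith : x + α * (y - x) ≤ x)
          linarith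
        rw [abs_of_neg h2]
        simp only [hφ]
        nlinarith [hk]
      · have hprod : 0 < α * (y - x) := mul_pos hα (by linarith)
        have hIoc : Set.Ioc x (x + α * (y - x)) ⊆ Metric.ball x δ₃ := by
          intro t ht
          rw [Metric.mem_ball, Real.dist_eq, abs_of_pos (by linarith [ht.1])]
          have h1 : α * |y - x| = α * (y - x) := by
            rw [abs_of_pos (by linarith : (0:ℝ) < y - x)]
          linarith [ht.2]
        have hk := hψm x (x + α * (y - x)) (by linarith) hIoc
        simp only [add_sub_cancel_left] at hk
        have h1 : α * |y - x| = α * (y - x) := by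
          rw [abs_of_pos (by linarith : (0:ℝ) < y - x)]
        have h2 : 0 < φ (x + α * (y - x)) - φ x := by
          simp only [hφ]
          have := hψmono (by linarith : x ≤ x + α * (y - x))
          linarith
        rw [abs_of_pos h2]
        simp only [hφ]
        nlinarith [hk]
    rw [Real.dist_eq, sub_zero, abs_div]
    calc |F y - F x - f x * (y - x)| / |φ (x + α * (y - x)) - φ x|
        ≤ ((C + |f x|) * |y - x|) / (((m:ℝ) + 1) * (α * |y - x|)) :=
          div_le_div₀ (mul_nonneg (by positivity) (abs_nonneg _)) hnum (by positivity) hden2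
      _ = (C + |f x|) / (((m:ℝ) + 1) * α) := by
          rw [div_eq_div_iff (by positivity : (0:ℝ) < ((m:ℝ) + 1) * (α * |y - x|)).ne'
            (by positivity : (0:ℝ) < ((m:ℝ) + 1) * α).ne']
          ring
      _ < ε := by
          rw [div_lt_iff₀ (by positivity)]
          have heq : ε * (((m:ℝ) + 1) * α) = ((m:ℝ) + 1) * (α * ε) := by ring
          linarith [hεm]
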